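/- For toy graph (c) — blue bridge b adjacent to red bridge r, with n blue leaves attached to b, and on the red side a 3-level chain structure: r adjacent to n red nodes, each of those adjacent to one blue node, each of those blue nodes adjacent to one red pendant — the 1-hop structural bias equals NB^(1) = (n² − n + 2)/(2(n+1)(2n+1)). -/

import Mathlib

open Finset
open scoped Classical

/-- The set of nodes at shortest-path distance exactly `k` from `v`. -/
noncomputable def Nk {V : Type*} [Fintype V] (G : SimpleGraph V) (k : ℕ) (v : V) : Finset V :=
  Finset.univ.filter (fun w => G.dist v w = k)

/-- Nodes of sensitive group `s` having a nonempty `k`-hop neighborhood. -/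
noncomputable def Vk {V : Type*} [Fintype V] (G : SimpleGraph V) (S : V → Bool) (k : ℕ)
    (s : Bool) : Finset V :=
  Finset.univ.filter (fun v => S v = s ∧ (Nk G k v).Nonempty)

/-- `k`-hop group exposure: average over group-`s` nodes (with nonempty `k`-hop
neighborhood) of the fraction of their `k`-hop neighbors in group `s'`. -/
noncomputable def phi {V : Type*} [Fintype V] (G : SimpleGraph V) (S : V → Bool) (k : ℕ)
    (s s' : Bool) : ℝ :=
  (∑ v ∈ Vk G S k s,
      (((Nk G k v).filter (fun w => S w = s')).card : ℝ) / ((Nk G k v).card : ℝ)) /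
    ((Vk G S k s).card : ℝ)

/-- Binary-attribute `k`-hop structural bias `NB^(k) = |φ_{0→0} + φ_{1→1} − 1|`. -/
noncomputable def NB {V : Type*} [Fintype V] (G : SimpleGraph V) (S : V → Bool) (k : ℕ) : ℝ :=
  |phi G S k false false + phi G S k true true - 1|

/-- Vertices of toy graph (c): `Sum.inl x` is the bridge node of color `x`
(`false` = blue, `true` = red); `Sum.inr (Sum.inl i)` is the `i`-th blue pendant leaf
on the blue bridge; `Sum.inr (Sum.inr (i, l))` is the `l`-th node of the `i`-th chain
on the red side (`l = 0`: red node `xᵢ` adjacent to the red bridge, `l = 1`: blue node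
`yᵢ`, `l = 2`: red pendant `zᵢ`). -/
abbrev Vc (n : ℕ) := Bool ⊕ (Fin n ⊕ (Fin n × Fin 3))

def relC (n : ℕ) : Vc n → Vc n → Prop
  | Sum.inl _, Sum.inl _ => True
  | Sum.inl x, Sum.inr (Sum.inl _) => x = false
  | Sum.inl x, Sum.inr (Sum.inr p) => x = true ∧ p.2 = 0
  | Sum.inr (Sum.inr p), Sum.inr (Sum.inr q) => p.1 = q.1 ∧ (q.2 : ℕ) = (p.2 : ℕ) + 1
  | _, _ => False

/-- Toy graph (c). -/
def Gc (n : ℕ) : SimpleGraph (Vc n) := SimpleGraph.fromRel (relC n)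

/-- Colors in toy graph (c). -/
def Sc (n : ℕ) : Vc n → Bool
  | Sum.inl x => x
  | Sum.inr (Sum.inl _) => false
  | Sum.inr (Sum.inr p) => if p.2 = 1 then false else true

namespace Aux
variable (n : ℕ)

@[simp] lemma Sc_inl (x : Bool) : Sc n (Sum.inl x) = x := rfl
@[simp] lemma Sc_leaf (i : Fin n) : Sc n (Sum.inr (Sum.inl i)) = false := rfl
@[simp] lemma Sc_chain (i : Fin n) (l : Fin 3) :
    Sc n (Sum.inr (Sum.inr (i, l))) = if l = 1 then false else true := rfl

lemma Nk_bf : Nk (Gc n) 1 (Sum.inl false) =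
    insert (Sum.inl true) ((univ : Finset (Fin n)).image fun i => (Sum.inr (Sum.inl i) : Vc n)) := by
  ext w
  rcases w with x | i | ⟨i, l⟩ <;>
    simp [Nk, SimpleGraph.dist_eq_one_iff_adj, Gc, relC, SimpleGraph.fromRel_adj]

lemma Nk_bt : Nk (Gc n) 1 (Sum.inl true) =
    insert (Sum.inl false) ((univ : Finset (Fin n)).image fun i => (Sum.inr (Sum.inr (i, 0)) : Vc n)) := by
  ext w
  rcases w with x | i | ⟨i, l⟩ <;>
    simp [Nk, SimpleGraph.dist_eq_one_iff_adj, Gc, relC, SimpleGraph.fromRel_adj, Prod.ext_iff] <;> aesop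

lemma Nk_leaf (i : Fin n) : Nk (Gc n) 1 (Sum.inr (Sum.inl i)) = {Sum.inl false} := by
  ext w
  rcases w with x | j | ⟨j, l⟩ <;>
    simp [Nk, SimpleGraph.dist_eq_one_iff_adj, Gc, relC, SimpleGraph.fromRel_adj]

lemma Nk_x (i : Fin n) : Nk (Gc n) 1 (Sum.inr (Sum.inr (i, 0))) =
    {Sum.inl true, Sum.inr (Sum.inr (i, 1))} := by
  ext w
  rcases w with x | j | ⟨j, l⟩ <;>
    simp [Nk, SimpleGraph.dist_eq_one_iff_adj, Gc, relC, SimpleGraph.fromRel_adj, Prod.ext_iff] <;>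
    constructor <;> intro h <;> fin_cases l <;> simp_all <;> omega

lemma Nk_y (i : Fin n) : Nk (Gc n) 1 (Sum.inr (Sum.inr (i, 1))) =
    {Sum.inr (Sum.inr (i, 0)), Sum.inr (Sum.inr (i, 2))} := by
  ext w
  rcases w with x | j | ⟨j, l⟩ <;>
    simp [Nk, SimpleGraph.dist_eq_one_iff_adj, Gc, relC, SimpleGraph.fromRel_adj, Prod.ext_iff] <;>
    constructor <;> intro h <;> fin_cases l <;> simp_all <;> omega

lemma Nk_z (i : Fin n) : Nk (Gc n) 1 (Sum.inr (Sum.inr (i, 2))) =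
    {Sum.inr (Sum.inr (i, 1))} := by
  ext w
  rcases w with x | j | ⟨j, l⟩ <;>
    simp [Nk, SimpleGraph.dist_eq_one_iff_adj, Gc, relC, SimpleGraph.fromRel_adj, Prod.ext_iff] <;>
    constructor <;> intro h <;> fin_cases l <;> simp_all <;> omega

lemma Nk_ne (v : Vc n) : (Nk (Gc n) 1 v).Nonempty := by
  rcases v with x | i | ⟨i, l⟩
  · cases x
    · rw [Nk_bf]; exact insert_nonempty _ _
    · rw [Nk_bt]; exact insert_nonempty _ _
  · rw [Nk_leaf]; exact singleton_nonempty _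
  · fin_cases l
    · show (Nk (Gc n) 1 (Sum.inr (Sum.inr (i, 0)))).Nonempty
      rw [Nk_x]; exact insert_nonempty _ _
    · show (Nk (Gc n) 1 (Sum.inr (Sum.inr (i, 1)))).Nonempty
      rw [Nk_y]; exact insert_nonempty _ _
    · show (Nk (Gc n) 1 (Sum.inr (Sum.inr (i, 2)))).Nonempty
      rw [Nk_z]; exact singleton_nonempty _

lemma Vk_eq (s : Bool) : Vk (Gc n) (Sc n) 1 s = univ.filter (fun v => Sc n v = s) := by
  unfold Vk
  refine filter_congr fun v _ => ?_
  simp [Nk_ne]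

lemma card_Vk (s : Bool) : (Vk (Gc n) (Sc n) 1 s).card = 2 * n + 1 := by
  rw [Vk_eq, card_filter, Fintype.sum_sum_type, Fintype.sum_sum_type, Fintype.sum_prod_type]
  cases s <;>
    simp [Fin.sum_univ_three, Fintype.sum_bool] <;> ring

-- card lemmas
lemma inj1 : Function.Injective (fun i => (Sum.inr (Sum.inl i) : Vc n)) := by
  intro a b h; simpa using h

lemma inj2 : Function.Injective (fun i => (Sum.inr (Sum.inr (i, 0)) : Vc n)) := by
  intro a b h; simpa using h

lemma card_Nbf : (Nk (Gc n) 1 (Sum.inl false)).card = n + 1 := by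
  rw [Nk_bf, card_insert_of_notMem (by simp), card_image_of_injective _ (inj1 n)]
  simp

lemma card_Nbf_f : ((Nk (Gc n) 1 (Sum.inl false)).filter (fun w => Sc n w = false)).card = n := by
  have h : (Nk (Gc n) 1 (Sum.inl false)).filter (fun w => Sc n w = false)
      = (univ : Finset (Fin n)).image fun i => (Sum.inr (Sum.inl i) : Vc n) := by
    rw [Nk_bf]; ext w; rcases w with x | i | ⟨i, l⟩ <;> simp
  rw [h, card_image_of_injective _ (inj1 n)]; simp

lemma card_Nbt : (Nk (Gc n) 1 (Sum.inl true)).card = n + 1 := by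
  rw [Nk_bt, card_insert_of_notMem (by simp), card_image_of_injective _ (inj2 n)]
  simp

lemma card_Nbt_t : ((Nk (Gc n) 1 (Sum.inl true)).filter (fun w => Sc n w = true)).card = n := by
  have h : (Nk (Gc n) 1 (Sum.inl true)).filter (fun w => Sc n w = true)
      = (univ : Finset (Fin n)).image fun i => (Sum.inr (Sum.inr (i, 0)) : Vc n) := by
    rw [Nk_bt]; ext w; rcases w with x | i | ⟨i, l⟩ <;> simp <;> aesop
  rw [h, card_image_of_injective _ (inj2 n)]; simp

end Aux

namespace Aux
variable (n : ℕ)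

lemma card_Nleaf (i : Fin n) : (Nk (Gc n) 1 (Sum.inr (Sum.inl i))).card = 1 := by
  rw [Nk_leaf]; simp

lemma card_Nleaf_f (i : Fin n) :
    ((Nk (Gc n) 1 (Sum.inr (Sum.inl i))).filter (fun w => Sc n w = false)).card = 1 := by
  rw [Nk_leaf, filter_singleton]; simp

lemma card_Nx (i : Fin n) : (Nk (Gc n) 1 (Sum.inr (Sum.inr (i, 0)))).card = 2 := by
  rw [Nk_x]; simp

lemma card_Nx_t (i : Fin n) :
    ((Nk (Gc n) 1 (Sum.inr (Sum.inr (i, 0)))).filter (fun w => Sc n w = true)).card = 1 := by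
  rw [Nk_x]; rw [filter_insert, filter_singleton]; simp

lemma card_Ny_f (i : Fin n) :
    ((Nk (Gc n) 1 (Sum.inr (Sum.inr (i, 1)))).filter (fun w => Sc n w = false)).card = 0 := by
  rw [Nk_y]; rw [filter_insert, filter_singleton]; simp

lemma card_Nz_t (i : Fin n) :
    ((Nk (Gc n) 1 (Sum.inr (Sum.inr (i, 2)))).filter (fun w => Sc n w = true)).card = 0 := by
  rw [Nk_z]; rw [filter_singleton]; simp

lemma sum_ff : ∑ v ∈ Vk (Gc n) (Sc n) 1 false,
    (((Nk (Gc n) 1 v).filter (fun w => Sc n w = false)).card : ℝ) / ((Nk (Gc n) 1 v).card : ℝ)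
    = n / (n + 1) + n := by
  rw [Vk_eq, sum_filter, Fintype.sum_sum_type, Fintype.sum_sum_type, Fintype.sum_prod_type]
  simp [Fin.sum_univ_three, Fintype.sum_bool, card_Nbf, card_Nbf_f, card_Nleaf,
    card_Nleaf_f, card_Ny_f]

lemma sum_tt : ∑ v ∈ Vk (Gc n) (Sc n) 1 true,
    (((Nk (Gc n) 1 v).filter (fun w => Sc n w = true)).card : ℝ) / ((Nk (Gc n) 1 v).card : ℝ)
    = n / (n + 1) + n / 2 := by
  rw [Vk_eq, sum_filter, Fintype.sum_sum_type, Fintype.sum_sum_type, Fintype.sum_prod_type]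
  simp [Fin.sum_univ_three, Fintype.sum_bool, card_Nbt, card_Nbt_t, card_Nx,
    card_Nx_t, card_Nz_t]
  ring

end Aux

/-- for toy graph (c) — blue bridge with `n` blue pendant leaves,
adjacent to a red bridge carrying `n` chains red–blue–red — the 1-hop structural bias
equals `NB^(1) = (n² − n + 2)/(2(n+1)(2n+1))`. -/
theorem stmt9 (n : ℕ) (hn : 0 < n) :
    NB (Gc n) (Sc n) 1 =
      ((n : ℝ) ^ 2 - (n : ℝ) + 2) / (2 * ((n : ℝ) + 1) * (2 * (n : ℝ) + 1)) := by
  have h1 : (0:ℝ) < (n:ℝ) + 1 := by positivity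
  have h2 : (0:ℝ) < 2*(n:ℝ) + 1 := by positivity
  unfold NB phi
  rw [Aux.sum_ff, Aux.sum_tt, Aux.card_Vk, Aux.card_Vk]
  push_cast
  have key : ((n:ℝ) / (n + 1) + n) / (2 * n + 1) + ((n:ℝ) / (n + 1) + n / 2) / (2 * n + 1) - 1
      = -(((n : ℝ) ^ 2 - (n : ℝ) + 2) / (2 * ((n : ℝ) + 1) * (2 * (n : ℝ) + 1))) := by
    field_simp
    ring
  rw [key, abs_neg, abs_of_nonneg]
  apply div_nonneg
  · nlinarith [sq_nonneg ((n:ℝ) - 1)]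
  · positivity
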